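/- arXiv:1905.01759 — 2 statements merged into one kernel-verified Lean document; each statement's English description precedes it below -/
import Mathlib

section
/- Let r > 0, p ≥ 1 be real numbers, and let A, B, C ≥ 0 be real numbers satisfying B ≤ (r²/6)A and C ≤ (r²/6)B. Then (p(p−1)r²/4)·A − (p² − p − 1)·B + ((p−1)(p−2)/r²)·C ≥ ((2p² − 3p + 4)/(2r²))·C. -/
/-- Coercivity estimate for the p-Willmore index form on the round sphere. -/
theorem stmt_6 (r p A B C : ℝ) (hr : 0 < r) (hp : 1 ≤ p)
    (hA : 0 ≤ A) (hB : 0 ≤ B) (hC : 0 ≤ C)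
    (hBA : B ≤ r ^ 2 / 6 * A) (hCB : C ≤ r ^ 2 / 6 * B) :
    (p * (p - 1) * r ^ 2 / 4) * A - (p ^ 2 - p - 1) * B
      + ((p - 1) * (p - 2) / r ^ 2) * C ≥ ((2 * p ^ 2 - 3 * p + 4) / (2 * r ^ 2)) * C := by
  have hr2 : (0:ℝ) < r ^ 2 := by positivity
  have h1 : 6 * B ≤ r ^ 2 * A := by nlinarith
  have h2 : 6 * C ≤ r ^ 2 * B := by nlinarith
  have hp0 : (0:ℝ) ≤ p := le_trans zero_le_one hp
  rw [ge_iff_le, ← sub_nonneg]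
  have key : p * (p - 1) * r ^ 2 / 4 * A - (p ^ 2 - p - 1) * B
      + ((p - 1) * (p - 2) / r ^ 2) * C - (2 * p ^ 2 - 3 * p + 4) / (2 * r ^ 2) * C
      = (p * (p - 1) * (r ^ 2) ^ 2 / 4 * A - (p ^ 2 - p - 1) * r ^ 2 * B
        + (p - 1) * (p - 2) * C - (2 * p ^ 2 - 3 * p + 4) / 2 * C) / r ^ 2 := by
    field_simp
  rw [key]
  apply div_nonneg _ hr2.le
  nlinarith [mul_nonneg (mul_nonneg (mul_nonneg hp0 (sub_nonneg.2 hp)) hr2.le) (sub_nonneg.2 h1),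
    mul_nonneg (sub_nonneg.2 h2) (sq_nonneg (p - 1)),
    sq_nonneg (2 * p - 3), mul_nonneg hC (sq_nonneg (2 * p - 3)),
    mul_nonneg (mul_nonneg hp0 (sub_nonneg.2 hp)) (sub_nonneg.2 h1)]
end

section
/- Let p ≥ 1, r > 0, and let f(A,B,C) = (p(p−1)r²/4)A − (p²−p−1)B + ((p−1)(p−2)/r²)C. If A ≥ (6/r²)B ≥ 0 and B ≥ (6/r²)C ≥ 0, then f(A,B,C) ≥ 0, with f(A,B,C) = 0 only if C = 0 or p satisfies 2p² − 3p + 4 = 0 (which has no real roots); hence f(A,B,C) > 0 whenever C > 0. -/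
set_option maxHeartbeats 1000000


/-- Strict positivity of the p-Willmore index form on the sphere: if
`A ≥ (6/r²)B ≥ 0` and `B ≥ (6/r²)C ≥ 0` then
`f(A,B,C) = (p(p−1)r²/4)A − (p²−p−1)B + ((p−1)(p−2)/r²)C ≥ 0`, it can vanish
only if `C = 0` or `2p² − 3p + 4 = 0` (which has no real roots), and hence
`f(A,B,C) > 0` whenever `C > 0`. -/
theorem stmt_18 (p r A B C : ℝ) (hp : 1 ≤ p) (hr : 0 < r)
    (hAB : A ≥ 6 / r ^ 2 * B) (hB0 : 0 ≤ 6 / r ^ 2 * B)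
    (hBC : B ≥ 6 / r ^ 2 * C) (hC0 : 0 ≤ 6 / r ^ 2 * C) :
    0 ≤ (p * (p - 1) * r ^ 2 / 4) * A - (p ^ 2 - p - 1) * B
        + ((p - 1) * (p - 2) / r ^ 2) * C ∧
      ((p * (p - 1) * r ^ 2 / 4) * A - (p ^ 2 - p - 1) * B
          + ((p - 1) * (p - 2) / r ^ 2) * C = 0 →
        C = 0 ∨ 2 * p ^ 2 - 3 * p + 4 = 0) ∧
      (¬ ∃ q : ℝ, 2 * q ^ 2 - 3 * q + 4 = 0) ∧
      (0 < C → 0 < (p * (p - 1) * r ^ 2 / 4) * A - (p ^ 2 - p - 1) * B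
        + ((p - 1) * (p - 2) / r ^ 2) * C) := by
  have hr2 : (0:ℝ) < r ^ 2 := by positivity
  have h6 : (0:ℝ) < 6 / r ^ 2 := by positivity
  set f := (p * (p - 1) * r ^ 2 / 4) * A - (p ^ 2 - p - 1) * B
        + ((p - 1) * (p - 2) / r ^ 2) * C with hf
  have hC : 0 ≤ C := nonneg_of_mul_nonneg_right hC0 h6
  have hB : 0 ≤ B := nonneg_of_mul_nonneg_right hB0 h6
  have hAB' : 6 * B ≤ A * r ^ 2 := by
    rw [ge_iff_le, div_mul_eq_mul_div, div_le_iff₀ hr2] at hAB; linarith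
  have hBC' : 6 * C ≤ B * r ^ 2 := by
    rw [ge_iff_le, div_mul_eq_mul_div, div_le_iff₀ hr2] at hBC; linarith
  have hE : f * r ^ 2 = p * (p - 1) * r ^ 2 * A * r ^ 2 / 4
      - (p ^ 2 - p - 1) * B * r ^ 2 + (p - 1) * (p - 2) * C := by
    rw [hf]; field_simp
  have hqpos : 0 < 2 * p ^ 2 - 3 * p + 4 := by nlinarith [sq_nonneg (4 * p - 3)]
  have key : (4 * p ^ 2 - 6 * p + 8) * C ≤ f * r ^ 2 := by
    rw [hE]
    nlinarith [mul_nonneg (by nlinarith : (0:ℝ) ≤ p * (p - 1))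
        (sub_nonneg.mpr hAB'),
      mul_nonneg (by nlinarith [sq_nonneg (2 * p - 1)] : (0:ℝ) ≤ p ^ 2 - p + 2)
        (sub_nonneg.mpr hBC')]
  have hf0 : (4 * p ^ 2 - 6 * p + 8) * C / r ^ 2 ≤ f := (div_le_iff₀ hr2).mpr key
  have hnum : 0 ≤ (4 * p ^ 2 - 6 * p + 8) * C := mul_nonneg (by nlinarith) hC
  refine ⟨le_trans (div_nonneg hnum hr2.le) hf0, ?_, ?_, ?_⟩
  · intro h0
    left
    nlinarith [key]
  · rintro ⟨q, hq⟩
    nlinarith [sq_nonneg (4 * q - 3)]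
  · intro hCpos
    exact lt_of_lt_of_le (div_pos (by nlinarith) hr2) hf0
end
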